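/- Let q be an odd prime power of characteristic p, and let {x_k}_{k∈[n]} in 𝔽_{q²}^d be an (a,b,c₁)-equiangular tight frame with n = d², a ≠ 0, a² ≠ b, and a² − b = b c₁ / a. Then {x_k}_{k∈[n]} is an (a,c₁,c₂)-projective 2-design with c₂ = 2(a²−b). -/

import Mathlib

open Matrix Kronecker BigOperators

/-- The Hermitian form `⟨u, v⟩ = ∑ᵢ uᵢ^q vᵢ`, with conjugation the Frobenius `a ↦ a^q`. -/
def hermForm {F : Type*} [Field F] {ι : Type*} [Fintype ι] (q : ℕ) (u v : ι → F) : F :=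
  ∑ i, (u i) ^ q * v i

/-- The rank-one matrix `x x^*`, with conjugation `a ↦ a^q`. -/
def rankOne {F : Type*} [Field F] {d : ℕ} (q : ℕ) (x : Fin d → F) :
    Matrix (Fin d) (Fin d) F :=
  vecMulVec x (fun i => (x i) ^ q)

/-- The tensor square `x ⊗ x`. -/
def tensorSq {F : Type*} [Field F] {d : ℕ} (x : Fin d → F) : Fin d × Fin d → F :=
  fun p => x p.1 * x p.2

/-- The matrix `Π_d^{(2)} = ½ ∑ᵢⱼ (eᵢeᵢ^* ⊗ eⱼeⱼ^* + eᵢeⱼ^* ⊗ eⱼeᵢ^*)`. -/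
noncomputable def symProj (F : Type*) [Field F] (d : ℕ) :
    Matrix (Fin d × Fin d) (Fin d × Fin d) F :=
  (2 : F)⁻¹ • ∑ i : Fin d, ∑ j : Fin d,
    (single i i (1 : F) ⊗ₖ single j j (1 : F)
      + single i j (1 : F) ⊗ₖ single j i (1 : F))

/-- `{xₖ}` is an `(a, c₁, c₂)`-projective 2-design for `𝔽_{q²}^d`. -/
noncomputable def IsProj2Design {F : Type*} [Field F] (q d n : ℕ)
    (x : Fin n → Fin d → F) (a c₁ c₂ : F) : Prop :=
  a ^ q = a ∧ c₁ ^ q = c₁ ∧ c₂ ^ q = c₂ ∧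
  (∀ k, hermForm q (x k) (x k) = a) ∧
  (∑ k, rankOne q (x k)) = c₁ • (1 : Matrix (Fin d) (Fin d) F) ∧
  (∑ k, vecMulVec (tensorSq (x k)) (fun p => (tensorSq (x k) p) ^ q))
    = c₂ • symProj F d

section Aux
variable {F : Type*} [Field F] {q d n : ℕ}

lemma sum_factor (f : Fin n → F) (A B : Fin d → F) (y z : Fin n → Fin d → F) :
    ∑ w, f w * ((∑ i, A i * y w i) * (∑ j, B j * z w j))
      = ∑ i, ∑ j, (A i * B j) * (∑ w, f w * (y w i * z w j)) := by
  have h : ∀ w : Fin n, f w * ((∑ i, A i * y w i) * (∑ j, B j * z w j))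
      = ∑ i, ∑ j, (A i * B j) * (f w * (y w i * z w j)) := by
    intro w
    rw [Finset.sum_mul_sum, Finset.mul_sum]
    refine Finset.sum_congr rfl fun i _ => ?_
    rw [Finset.mul_sum]
    exact Finset.sum_congr rfl fun j _ => by ring
  simp_rw [h, Finset.mul_sum]
  rw [Finset.sum_comm]
  exact Finset.sum_congr rfl fun i _ => Finset.sum_comm

lemma key_of_tight {x : Fin n → Fin d → F} {c₁ : F}
    (htight : (∑ w, rankOne q (x w)) = c₁ • (1 : Matrix (Fin d) (Fin d) F)) :
    ∀ i i' : Fin d, (∑ w, x w i * (x w i') ^ q) = if i = i' then c₁ else 0 := by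
  intro i i'
  have h := congrFun (congrFun htight i) i'
  simp only [Matrix.sum_apply, rankOne, vecMulVec_apply, Matrix.smul_apply,
    Matrix.one_apply, smul_eq_mul] at h
  rw [h]
  split <;> simp

lemma tight_gram {x : Fin n → Fin d → F} {c₁ : F}
    (hkey : ∀ i i' : Fin d, (∑ w, x w i * (x w i') ^ q) = if i = i' then c₁ else 0) :
    ∀ u v : Fin n, ∑ w, hermForm q (x u) (x w) * hermForm q (x w) (x v)
      = c₁ * hermForm q (x u) (x v) := by
  intro u v
  have e1 : ∀ w, hermForm q (x u) (x w) * hermForm q (x w) (x v)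
      = (1 : F) * ((∑ i, (x u i) ^ q * x w i) * (∑ j, x v j * (x w j) ^ q)) := by
    intro w
    rw [one_mul]
    unfold hermForm
    congr 1
    exact Finset.sum_congr rfl fun j _ => mul_comm _ _
  simp_rw [e1]
  rw [sum_factor]
  simp_rw [one_mul, hkey, mul_ite, mul_zero, Finset.sum_ite_eq, Finset.mem_univ, if_pos]
  unfold hermForm
  rw [Finset.mul_sum]
  exact Finset.sum_congr rfl fun i _ => by ring

lemma etf_indep {x : Fin n → Fin d → F} {a b c₁ : F}
    (hnorm : ∀ w, hermForm q (x w) (x w) = a)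
    (hang : ∀ w w', w ≠ w' → hermForm q (x w) (x w') * hermForm q (x w') (x w) = b)
    (htight : (∑ w, rankOne q (x w)) = c₁ • (1 : Matrix (Fin d) (Fin d) F))
    (hn : n = d ^ 2) (hΔ : a ^ 2 - b ≠ 0) (hc0 : c₁ ≠ 0) :
    LinearIndependent F (fun w => rankOne q (x w)) := by
  classical
  rw [Fintype.linearIndependent_iff]
  intro c hc r
  have hcE : ∀ i j, (∑ w, c w * (x w i * (x w j) ^ q)) = 0 := by
    intro i j
    have h := congrFun (congrFun hc i) j
    simpa [Matrix.sum_apply, rankOne, vecMulVec_apply] using h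
  have hpair : ∀ r' : Fin n, b * (∑ w, c w) + (a ^ 2 - b) * c r' = 0 := by
    intro r'
    have e1 : ∀ w, c w * (hermForm q (x r') (x w) * hermForm q (x w) (x r'))
        = c w * ((∑ i, (x r' i) ^ q * x w i) * (∑ j, x r' j * (x w j) ^ q)) := by
      intro w
      unfold hermForm
      congr 2
      exact Finset.sum_congr rfl fun j _ => mul_comm _ _
    have h0 : ∑ w, c w * (hermForm q (x r') (x w) * hermForm q (x w) (x r')) = 0 := by
      rw [Finset.sum_congr rfl fun w _ => e1 w, sum_factor]
      simp_rw [hcE, mul_zero, Finset.sum_const_zero]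
    have e2 : ∀ w, c w * (hermForm q (x r') (x w) * hermForm q (x w) (x r'))
        = b * c w + (if w = r' then (a ^ 2 - b) * c w else 0) := by
      intro w
      by_cases hw : w = r'
      · subst hw
        rw [hnorm w, if_pos rfl]
        ring
      · rw [hang r' w (fun h => hw h.symm), if_neg hw]
        ring
    rw [Finset.sum_congr rfl fun w _ => e2 w, Finset.sum_add_distrib, ← Finset.mul_sum,
      Finset.sum_ite_eq'] at h0
    simpa using h0
  have hall : ∀ w, c w = c r := by
    intro w
    have h1 := (hpair w).trans (hpair r).symm
    exact mul_left_cancel₀ hΔ (add_left_cancel h1)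
  by_contra hcr
  have hd : d ≠ 0 := by
    rintro rfl
    simp only [pow_two, Nat.mul_zero, Nat.zero_mul] at hn
    exact Nat.not_lt_zero r.1 (hn ▸ r.2)
  have hsum : (0 : Matrix (Fin d) (Fin d) F) = c r • (c₁ • (1 : Matrix (Fin d) (Fin d) F)) := by
    rw [← htight, ← hc, Finset.smul_sum]
    exact Finset.sum_congr rfl fun w _ => by rw [hall w]
  have h3 := congrFun (congrFun hsum ⟨0, Nat.pos_of_ne_zero hd⟩) ⟨0, Nat.pos_of_ne_zero hd⟩
  simp only [Matrix.zero_apply, Matrix.smul_apply, Matrix.one_apply_eq, smul_eq_mul,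
    mul_one] at h3
  rcases mul_eq_zero.mp h3.symm with h | h
  · exact hcr h
  · exact hc0 h

lemma etf_star {x : Fin n → Fin d → F} {a b c₁ : F}
    (hnorm : ∀ w, hermForm q (x w) (x w) = a)
    (hang : ∀ w w', w ≠ w' → hermForm q (x w) (x w') * hermForm q (x w') (x w) = b)
    (htight : (∑ w, rankOne q (x w)) = c₁ • (1 : Matrix (Fin d) (Fin d) F))
    (hn : n = d ^ 2) (ha : a ≠ 0) (hΔ : a ^ 2 - b ≠ 0) (hc0 : c₁ ≠ 0)
    (hrel : a ^ 2 - b = b * c₁ / a) :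
    ∀ r s l m : Fin n,
      ∑ w, (hermForm q (x r) (x w) * hermForm q (x s) (x w))
          * (hermForm q (x w) (x l) * hermForm q (x w) (x m))
        = (a ^ 2 - b) * (hermForm q (x s) (x l) * hermForm q (x r) (x m))
          + (a ^ 2 - b) * (hermForm q (x r) (x l) * hermForm q (x s) (x m)) := by
  classical
  intro r s l m
  haveI : Nonempty (Fin n) := ⟨r⟩
  have hkey := key_of_tight htight
  have hT := tight_gram hkey
  have hLI := etf_indep hnorm hang htight hn hΔ hc0
  have hcardeq : Fintype.card (Fin n) = Module.finrank F (Matrix (Fin d) (Fin d) F) := by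
    rw [Fintype.card_fin, Module.finrank_matrix]
    simp [hn, pow_two]
  have hsp := hLI.span_eq_top_of_card_eq_finrank hcardeq
  have hmem : (Matrix.of fun i j => x l i * (x s j) ^ q : Matrix (Fin d) (Fin d) F)
      ∈ Submodule.span F (Set.range fun w => rankOne q (x w)) := by
    rw [hsp]; trivial
  obtain ⟨α, hexp⟩ := (Submodule.mem_span_range_iff_exists_fun F).mp hmem
  have hexpE : ∀ i j, (∑ w, α w * (x w i * (x w j) ^ q)) = x l i * (x s j) ^ q := by
    intro i j
    have h := congrFun (congrFun hexp i) j
    simpa [Matrix.sum_apply, rankOne, vecMulVec_apply] using h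
  have hc1 : (∑ w, α w) * a = hermForm q (x s) (x l) := by
    calc (∑ w, α w) * a = ∑ w, α w * hermForm q (x w) (x w) := by
          rw [Finset.sum_mul]; exact Finset.sum_congr rfl fun w _ => by rw [hnorm w]
      _ = ∑ w, ∑ i, α w * (x w i * (x w i) ^ q) := by
          refine Finset.sum_congr rfl fun w _ => ?_
          unfold hermForm
          rw [Finset.mul_sum]
          exact Finset.sum_congr rfl fun i _ => by ring
      _ = ∑ i, ∑ w, α w * (x w i * (x w i) ^ q) := Finset.sum_comm
      _ = ∑ i, x l i * (x s i) ^ q := Finset.sum_congr rfl fun i _ => hexpE i i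
      _ = hermForm q (x s) (x l) := by
          unfold hermForm; exact Finset.sum_congr rfl fun i _ => mul_comm _ _
  have hcM : ∀ u v : Fin n, ∑ w, α w * (hermForm q (x u) (x w) * hermForm q (x w) (x v))
      = hermForm q (x u) (x l) * hermForm q (x s) (x v) := by
    intro u v
    have e1 : ∀ w, α w * (hermForm q (x u) (x w) * hermForm q (x w) (x v))
        = α w * ((∑ i, (x u i) ^ q * x w i) * (∑ j, x v j * (x w j) ^ q)) := by
      intro w
      unfold hermForm
      congr 2
      exact Finset.sum_congr rfl fun j _ => mul_comm _ _
    rw [Finset.sum_congr rfl fun w _ => e1 w, sum_factor]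
    simp_rw [hexpE]
    unfold hermForm
    rw [Finset.sum_mul_sum]
    exact Finset.sum_congr rfl fun i _ => Finset.sum_congr rfl fun j _ => by ring
  have hc2 : ∀ w0 : Fin n, hermForm q (x s) (x w0) * hermForm q (x w0) (x l)
      = b * (∑ w, α w) + (a ^ 2 - b) * α w0 := by
    intro w0
    have h0 := hcM w0 w0
    have e2 : ∀ w, α w * (hermForm q (x w0) (x w) * hermForm q (x w) (x w0))
        = b * α w + (if w = w0 then (a ^ 2 - b) * α w else 0) := by
      intro w
      by_cases hw : w = w0
      · subst hw
        rw [hnorm w, if_pos rfl]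
        ring
      · rw [hang w0 w (fun h => hw h.symm), if_neg hw]
        ring
    rw [Finset.sum_congr rfl fun w _ => e2 w, Finset.sum_add_distrib, ← Finset.mul_sum,
      Finset.sum_ite_eq'] at h0
    simp only [Finset.mem_univ, if_true] at h0
    rw [h0]
    ring
  have hrel' : (a ^ 2 - b) * a = b * c₁ := by
    rw [hrel, div_mul_cancel₀ _ ha]
  have hbsc : b * (∑ w, α w) * c₁ = (a ^ 2 - b) * hermForm q (x s) (x l) := by
    apply mul_right_cancel₀ ha
    calc b * (∑ w, α w) * c₁ * a = (b * c₁) * ((∑ w, α w) * a) := by ring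
      _ = ((a ^ 2 - b) * a) * hermForm q (x s) (x l) := by rw [← hrel', hc1]
      _ = (a ^ 2 - b) * hermForm q (x s) (x l) * a := by ring
  calc ∑ w, (hermForm q (x r) (x w) * hermForm q (x s) (x w))
          * (hermForm q (x w) (x l) * hermForm q (x w) (x m))
      = ∑ w, (b * (∑ w', α w') + (a ^ 2 - b) * α w)
          * (hermForm q (x r) (x w) * hermForm q (x w) (x m)) := by
        refine Finset.sum_congr rfl fun w _ => ?_
        rw [← hc2 w]; ring
    _ = (∑ w, b * (∑ w', α w') * (hermForm q (x r) (x w) * hermForm q (x w) (x m)))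
        + (∑ w, (a ^ 2 - b) * (α w * (hermForm q (x r) (x w) * hermForm q (x w) (x m)))) := by
        rw [← Finset.sum_add_distrib]
        exact Finset.sum_congr rfl fun w _ => by ring
    _ = b * (∑ w', α w') * (∑ w, hermForm q (x r) (x w) * hermForm q (x w) (x m))
        + (a ^ 2 - b) * (∑ w, α w * (hermForm q (x r) (x w) * hermForm q (x w) (x m))) := by
        congr 1
        · exact (Finset.mul_sum _ _ _).symm
        · exact (Finset.mul_sum _ _ _).symm
    _ = b * (∑ w', α w') * (c₁ * hermForm q (x r) (x m))
        + (a ^ 2 - b) * (hermForm q (x r) (x l) * hermForm q (x s) (x m)) := by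
        rw [hT r m, hcM r m]
    _ = (a ^ 2 - b) * (hermForm q (x s) (x l) * hermForm q (x r) (x m))
        + (a ^ 2 - b) * (hermForm q (x r) (x l) * hermForm q (x s) (x m)) := by
        rw [show b * (∑ w', α w') * (c₁ * hermForm q (x r) (x m))
            = (b * (∑ w', α w') * c₁) * hermForm q (x r) (x m) from by ring, hbsc]
        ring


lemma symProj_apply (F : Type*) [Field F] (d : ℕ) (p p' : Fin d × Fin d) :
    symProj F d p p' = (2 : F)⁻¹ *
      ((if p.1 = p'.1 then 1 else 0) * (if p.2 = p'.2 then 1 else 0)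
        + (if p.1 = p'.2 then 1 else 0) * (if p.2 = p'.1 then 1 else 0)) := by
  obtain ⟨p1, p2⟩ := p
  obtain ⟨q1, q2⟩ := p'
  simp only [symProj, Matrix.smul_apply, smul_eq_mul]
  congr 1
  rw [Matrix.sum_apply]
  simp only [Matrix.sum_apply, Matrix.add_apply, Matrix.kroneckerMap_apply,
    Matrix.single, Matrix.of_apply, Finset.sum_add_distrib]
  congr 1
  · simp [ite_and, Finset.sum_ite_eq, eq_comm]
  · simp [ite_and, Finset.sum_ite_eq, eq_comm]
    split_ifs <;> rfl


lemma design_core {x : Fin n → Fin d → F} {a b c₁ : F}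
    (hnorm : ∀ w, hermForm q (x w) (x w) = a)
    (hang : ∀ w w', w ≠ w' → hermForm q (x w) (x w') * hermForm q (x w') (x w) = b)
    (htight : (∑ w, rankOne q (x w)) = c₁ • (1 : Matrix (Fin d) (Fin d) F))
    (hn : n = d ^ 2) (ha : a ≠ 0) (hΔ : a ^ 2 - b ≠ 0) (hc0 : c₁ ≠ 0)
    (hrel : a ^ 2 - b = b * c₁ / a) (h2 : (2 : F) ≠ 0) :
    (∑ w, vecMulVec (tensorSq (x w)) (fun p => (tensorSq (x w) p) ^ q))
      = (2 * (a ^ 2 - b)) • symProj F d := by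
  classical
  have hkey := key_of_tight htight
  have hstar := etf_star hnorm hang htight hn ha hΔ hc0 hrel
  set M : Matrix (Fin d × Fin d) (Fin d × Fin d) F :=
    ∑ w, vecMulVec (tensorSq (x w)) (fun p => (tensorSq (x w) p) ^ q) with hMdef
  set C : Matrix (Fin d × Fin d) (Fin d × Fin d) F := (2 * (a ^ 2 - b)) • symProj F d with hCdef
  set W : Matrix (Fin n × Fin n) (Fin d × Fin d) F :=
    Matrix.of (fun u p => (x u.1 p.1) ^ q * (x u.2 p.2) ^ q) with hW
  set V : Matrix (Fin d × Fin d) (Fin n × Fin n) F :=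
    Matrix.of (fun p v => x v.1 p.1 * x v.2 p.2) with hV
  set L : Matrix (Fin d × Fin d) (Fin n × Fin n) F :=
    Matrix.of (fun p u => c₁⁻¹ * x u.1 p.1 * (c₁⁻¹ * x u.2 p.2)) with hL
  set R : Matrix (Fin n × Fin n) (Fin d × Fin d) F :=
    Matrix.of (fun v p => c₁⁻¹ * (x v.1 p.1) ^ q * (c₁⁻¹ * (x v.2 p.2) ^ q)) with hR
  have hfact : ∀ (f g : Fin d → F), (∑ p : Fin d × Fin d, f p.1 * g p.2) = (∑ i, f i) * (∑ j, g j) := by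
    intro f g
    rw [Finset.sum_mul_sum]
    exact Fintype.sum_prod_type _
  have hLW : L * W = 1 := by
    ext p p'
    rw [Matrix.mul_apply, Fintype.sum_prod_type]
    have e : ∀ u1 u2 : Fin n, L p (u1, u2) * W (u1, u2) p'
        = (c₁⁻¹ * (x u1 p.1 * (x u1 p'.1) ^ q)) * (c₁⁻¹ * (x u2 p.2 * (x u2 p'.2) ^ q)) := by
      intro u1 u2; simp only [hL, hW, Matrix.of_apply]; ring
    simp_rw [e]
    rw [← Finset.sum_mul_sum]
    simp_rw [← Finset.mul_sum]
    rw [hkey, hkey, Matrix.one_apply]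
    by_cases h1 : p.1 = p'.1 <;> by_cases h2' : p.2 = p'.2 <;>
      simp [h1, h2', Prod.ext_iff, inv_mul_cancel₀ hc0]
  have hVR : V * R = 1 := by
    ext p p'
    rw [Matrix.mul_apply, Fintype.sum_prod_type]
    have e : ∀ v1 v2 : Fin n, V p (v1, v2) * R (v1, v2) p'
        = (c₁⁻¹ * (x v1 p.1 * (x v1 p'.1) ^ q)) * (c₁⁻¹ * (x v2 p.2 * (x v2 p'.2) ^ q)) := by
      intro v1 v2; simp only [hV, hR, Matrix.of_apply]; ring
    simp_rw [e]
    rw [← Finset.sum_mul_sum]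
    simp_rw [← Finset.mul_sum]
    rw [hkey, hkey, Matrix.one_apply]
    by_cases h1 : p.1 = p'.1 <;> by_cases h2' : p.2 = p'.2 <;>
      simp [h1, h2', Prod.ext_iff, inv_mul_cancel₀ hc0]
  have hMapp : ∀ p p' : Fin d × Fin d, M p p'
      = ∑ w, (x w p.1 * x w p.2) * ((x w p'.1) ^ q * (x w p'.2) ^ q) := by
    intro p p'
    rw [hMdef]
    simp only [Matrix.sum_apply, vecMulVec_apply, tensorSq, mul_pow]
  have hmid : W * M * V = W * C * V := by
    rw [Matrix.mul_assoc, Matrix.mul_assoc]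
    ext u v
    rw [Matrix.mul_apply, Matrix.mul_apply]
    have hMV : ∀ p : Fin d × Fin d, (M * V) p v
        = ∑ w, (x w p.1 * x w p.2) * (hermForm q (x w) (x v.1) * hermForm q (x w) (x v.2)) := by
      intro p
      rw [Matrix.mul_apply]
      simp_rw [hMapp, hV, Matrix.of_apply, Finset.sum_mul]
      rw [Finset.sum_comm]
      refine Finset.sum_congr rfl fun w _ => ?_
      rw [show hermForm q (x w) (x v.1) * hermForm q (x w) (x v.2)
          = (∑ i, (x w i) ^ q * x v.1 i) * (∑ j, (x w j) ^ q * x v.2 j) from rfl]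
      rw [← hfact (fun i => (x w i) ^ q * x v.1 i) (fun j => (x w j) ^ q * x v.2 j),
        Finset.mul_sum]
      exact Finset.sum_congr rfl fun p' _ => by ring
    have hCV : ∀ p : Fin d × Fin d, (C * V) p v
        = (a ^ 2 - b) * (x v.1 p.1 * x v.2 p.2) + (a ^ 2 - b) * (x v.1 p.2 * x v.2 p.1) := by
      intro p
      rw [Matrix.mul_apply]
      simp_rw [hCdef, Matrix.smul_apply, symProj_apply, smul_eq_mul, hV, Matrix.of_apply]
      rw [Fintype.sum_prod_type]
      have ee : ∀ i' j' : Fin d,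
          2 * (a ^ 2 - b) * ((2 : F)⁻¹ *
            ((if p.1 = i' then (1:F) else 0) * (if p.2 = j' then (1:F) else 0)
              + (if p.1 = j' then (1:F) else 0) * (if p.2 = i' then (1:F) else 0)))
            * (x v.1 i' * x v.2 j')
          = (a ^ 2 - b) * ((if p.1 = i' then (1:F) else 0) * ((if p.2 = j' then (1:F) else 0)
              * (x v.1 i' * x v.2 j')))
            + (a ^ 2 - b) * ((if p.2 = i' then (1:F) else 0) * ((if p.1 = j' then (1:F) else 0)
              * (x v.1 i' * x v.2 j'))) := by
        intro i' j'
        rw [show (2 * (a ^ 2 - b)) * ((2 : F)⁻¹ *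
            ((if p.1 = i' then (1:F) else 0) * (if p.2 = j' then (1:F) else 0)
              + (if p.1 = j' then (1:F) else 0) * (if p.2 = i' then (1:F) else 0)))
            * (x v.1 i' * x v.2 j')
          = ((2:F) * (2:F)⁻¹) * ((a ^ 2 - b) * ((if p.1 = i' then (1:F) else 0) * ((if p.2 = j' then (1:F) else 0)
              * (x v.1 i' * x v.2 j')))
            + (a ^ 2 - b) * ((if p.2 = i' then (1:F) else 0) * ((if p.1 = j' then (1:F) else 0)
              * (x v.1 i' * x v.2 j')))) from by ring, mul_inv_cancel₀ h2, one_mul]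
      rw [Finset.sum_congr rfl fun i' _ => Finset.sum_congr rfl fun j' _ => ee i' j']
      simp only [Finset.sum_add_distrib, ite_mul, one_mul, zero_mul, mul_ite, mul_zero,
        ← Finset.mul_sum, Finset.sum_ite_eq, Finset.mem_univ, if_true]
    calc ∑ p, W u p * (M * V) p v
        = ∑ p, ∑ w, W u p * ((x w p.1 * x w p.2)
            * (hermForm q (x w) (x v.1) * hermForm q (x w) (x v.2))) := by
          refine Finset.sum_congr rfl fun p _ => ?_
          rw [hMV p, Finset.mul_sum]
      _ = ∑ w, ∑ p, W u p * ((x w p.1 * x w p.2)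
            * (hermForm q (x w) (x v.1) * hermForm q (x w) (x v.2))) := Finset.sum_comm
      _ = ∑ w, (hermForm q (x u.1) (x w) * hermForm q (x u.2) (x w))
            * (hermForm q (x w) (x v.1) * hermForm q (x w) (x v.2)) := by
          refine Finset.sum_congr rfl fun w _ => ?_
          have h1 : ∑ p : Fin d × Fin d, W u p * ((x w p.1 * x w p.2)
              * (hermForm q (x w) (x v.1) * hermForm q (x w) (x v.2)))
              = (∑ p : Fin d × Fin d, ((x u.1 p.1) ^ q * x w p.1) * ((x u.2 p.2) ^ q * x w p.2))
                * (hermForm q (x w) (x v.1) * hermForm q (x w) (x v.2)) := by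
            rw [Finset.sum_mul]
            refine Finset.sum_congr rfl fun p _ => ?_
            simp only [hW, Matrix.of_apply]; ring
          rw [h1, hfact (fun i => (x u.1 i) ^ q * x w i) (fun j => (x u.2 j) ^ q * x w j)]
          rfl
      _ = (a ^ 2 - b) * (hermForm q (x u.2) (x v.1) * hermForm q (x u.1) (x v.2))
          + (a ^ 2 - b) * (hermForm q (x u.1) (x v.1) * hermForm q (x u.2) (x v.2)) :=
          hstar u.1 u.2 v.1 v.2
      _ = ∑ p, W u p * (C * V) p v := by
          simp_rw [hCV]
          have hs1 : ∑ p : Fin d × Fin d, W u p * (x v.1 p.1 * x v.2 p.2)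
              = hermForm q (x u.1) (x v.1) * hermForm q (x u.2) (x v.2) := by
            rw [show (∑ p : Fin d × Fin d, W u p * (x v.1 p.1 * x v.2 p.2))
                = ∑ p : Fin d × Fin d, ((x u.1 p.1) ^ q * x v.1 p.1) * ((x u.2 p.2) ^ q * x v.2 p.2) from
              Finset.sum_congr rfl fun p _ => by simp only [hW, Matrix.of_apply]; ring]
            rw [hfact (fun i => (x u.1 i) ^ q * x v.1 i) (fun j => (x u.2 j) ^ q * x v.2 j)]
            rfl
          have hs2 : ∑ p : Fin d × Fin d, W u p * (x v.1 p.2 * x v.2 p.1)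
              = hermForm q (x u.1) (x v.2) * hermForm q (x u.2) (x v.1) := by
            rw [show (∑ p : Fin d × Fin d, W u p * (x v.1 p.2 * x v.2 p.1))
                = ∑ p : Fin d × Fin d, ((x u.1 p.1) ^ q * x v.2 p.1) * ((x u.2 p.2) ^ q * x v.1 p.2) from
              Finset.sum_congr rfl fun p _ => by simp only [hW, Matrix.of_apply]; ring]
            rw [hfact (fun i => (x u.1 i) ^ q * x v.2 i) (fun j => (x u.2 j) ^ q * x v.1 j)]
            rfl
          have hdist : ∀ p : Fin d × Fin d, W u p * ((a ^ 2 - b) * (x v.1 p.1 * x v.2 p.2)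
              + (a ^ 2 - b) * (x v.1 p.2 * x v.2 p.1))
              = (a ^ 2 - b) * (W u p * (x v.1 p.1 * x v.2 p.2))
                + (a ^ 2 - b) * (W u p * (x v.1 p.2 * x v.2 p.1)) := fun p => by ring
          rw [Finset.sum_congr rfl fun p _ => hdist p, Finset.sum_add_distrib,
            ← Finset.mul_sum, ← Finset.mul_sum, hs1, hs2]
          ring
  have sandwich : ∀ X : Matrix (Fin d × Fin d) (Fin d × Fin d) F, L * (W * X * V) * R = X := by
    intro X
    calc L * (W * X * V) * R = (L * W) * X * (V * R) := by
          simp only [Matrix.mul_assoc]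
      _ = X := by rw [hLW, hVR, Matrix.one_mul, Matrix.mul_one]
  calc M = L * (W * M * V) * R := (sandwich M).symm
    _ = L * (W * C * V) * R := by rw [hmid]
    _ = C := sandwich C

end Aux

/-- Part of Theorem 3.10 ((b)∧(c)⇒(a), Case I): an `(a,b,c₁)`-ETF of `n = d²`
vectors in `𝔽_{q²}^d` with `a ≠ 0`, `a² ≠ b`, and `a² − b = b c₁ / a` is an
`(a, c₁, 2(a²−b))`-projective 2-design. -/
theorem etf_gerzon_equality_is_design
    (q p k d n : ℕ) (hp : p.Prime) (hq : q = p ^ k) (hodd : Odd q)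
    (F : Type*) [Field F] [Fintype F] (hcard : Fintype.card F = q ^ 2)
    (x : Fin n → Fin d → F) (a b c₁ : F)
    (ha' : a ^ q = a) (hb' : b ^ q = b) (hc₁' : c₁ ^ q = c₁)
    (hnorm : ∀ k, hermForm q (x k) (x k) = a)
    (hang : ∀ k ℓ, k ≠ ℓ → hermForm q (x k) (x ℓ) * hermForm q (x ℓ) (x k) = b)
    (htight : (∑ k, rankOne q (x k)) = c₁ • (1 : Matrix (Fin d) (Fin d) F))
    (hn : n = d ^ 2) (ha : a ≠ 0) (hab : a ^ 2 ≠ b)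
    (hrel : a ^ 2 - b = b * c₁ / a) :
    IsProj2Design q d n x a c₁ (2 * (a ^ 2 - b)) := by
  classical
  have hΔ : a ^ 2 - b ≠ 0 := sub_ne_zero.mpr hab
  have hc0 : c₁ ≠ 0 := by
    intro h
    apply hΔ
    rw [hrel, h, mul_zero, zero_div]
  have hk0 : k ≠ 0 := by
    rintro rfl
    rw [pow_zero] at hq
    have h1 : Fintype.card F = 1 := by rw [hcard, hq, one_pow]
    have h2 := Fintype.one_lt_card (α := F)
    omega
  have hpodd : Odd p := by
    rcases hp.eq_two_or_odd' with h2 | h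
    · exfalso
      rw [hq, h2] at hodd
      have heven : Even (2 ^ k) := (Nat.even_pow).mpr ⟨even_two, hk0⟩
      exact (Nat.not_even_iff_odd.mpr hodd) heven
    · exact h
  haveI hfact : Fact p.Prime := ⟨hp⟩
  haveI hchar : CharP F p := by
    obtain ⟨c, hc⟩ := CharP.exists F
    haveI := hc
    have hcprime : c.Prime := CharP.char_is_prime F c
    have hdvd : c ∣ p ^ (2 * k) := by
      rw [← CharP.cast_eq_zero_iff F c]
      have h0 : ((Fintype.card F : ℕ) : F) = 0 := Nat.cast_card_eq_zero F
      rw [hcard, hq, ← pow_mul, mul_comm k 2] at h0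
      exact_mod_cast h0
    have hcp : c = p := (Nat.prime_dvd_prime_iff_eq hcprime hp).mp (hcprime.dvd_of_dvd_pow hdvd)
    rwa [hcp] at hc
  have h2F : (2 : F) ≠ 0 := by
    intro h20
    have hdvd : p ∣ 2 := by
      rw [← CharP.cast_eq_zero_iff F p]
      exact_mod_cast h20
    have hp2 := (Nat.prime_dvd_prime_iff_eq hp Nat.prime_two).mp hdvd
    rw [hp2] at hpodd
    exact (by decide : ¬ Odd 2) hpodd
  have hc₂ : (2 * (a ^ 2 - b)) ^ q = 2 * (a ^ 2 - b) := by
    rw [mul_pow, hq, sub_pow_char_pow]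
    have e2 : (2 : F) ^ p ^ k = 2 := by
      have h := add_pow_char_pow (R := F) (1 : F) 1 (p := p) (n := k)
      norm_num at h
      exact h
    rw [e2, ← hq, ← pow_mul, mul_comm 2 q, pow_mul, ha', hb']
  exact ⟨ha', hc₁', hc₂, hnorm, htight,
    design_core hnorm hang htight hn ha hΔ hc0 hrel h2F⟩
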